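/- Let γ > 0, m > 0, d ∈ ℕ, and Λ ⊂ ℝ^d be uniformly discrete with separation m. For 0 < η ≤ γ/2 one has sup_{ℓ ∈ Λ} Σ_{k ∈ Λ} e^{-γ|ℓ-k|}·(e^{η|ℓ-k|} - 1) ≤ C·γ^{-(d+1)}·η for a constant C depending only on d and m. -/

import Mathlib

open Real ENNReal

-- x^d e^{-x} ≤ d^d
lemma aux_pow_mul_exp_neg_le (d : ℕ) (hd : 1 ≤ d) {x : ℝ} (hx : 0 ≤ x) :
    x ^ d * Real.exp (-x) ≤ (d : ℝ) ^ d := by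
  have hd0 : (0:ℝ) < d := by exact_mod_cast hd
  have h1 : x / d ≤ Real.exp (x / d) := (Real.add_one_le_exp _).trans' (by linarith [div_nonneg hx hd0.le])
  have h2 : x ≤ d * Real.exp (x / d) := by
    rw [← div_le_iff₀' hd0]; exact h1
  have h3 : x ^ d ≤ ((d : ℝ) * Real.exp (x / d)) ^ d :=
    pow_le_pow_left₀ hx h2 d
  have h4 : ((d : ℝ) * Real.exp (x / d)) ^ d = (d:ℝ)^d * Real.exp x := by
    rw [mul_pow, ← Real.exp_nat_mul]
    congr 1
    field_simp
  calc x ^ d * Real.exp (-x) ≤ ((d:ℝ)^d * Real.exp x) * Real.exp (-x) := by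
        apply mul_le_mul_of_nonneg_right (h3.trans h4.le) (Real.exp_nonneg _)
    _ = (d:ℝ)^d := by rw [mul_assoc, ← Real.exp_add, add_neg_cancel, Real.exp_zero, mul_one]

-- exp x - 1 ≤ x * exp x for x ≥ 0
lemma aux_exp_sub_one_le (x : ℝ) : Real.exp x - 1 ≤ x * Real.exp x := by
  have h1 : (-x + 1) * Real.exp x ≤ Real.exp (-x) * Real.exp x :=
    mul_le_mul_of_nonneg_right (Real.add_one_le_exp (-x)) (Real.exp_nonneg x)
  have h2 : Real.exp (-x) * Real.exp x = 1 := by rw [← Real.exp_add]; simp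
  nlinarith [h1, h2]

-- geometric over ℤ in ENNReal
lemma aux_tsum_int_le (q : ℝ≥0∞) : ∑' j : ℤ, q ^ j.natAbs ≤ 2 * (1 - q)⁻¹ := by
  have hinj : Function.Injective (fun j : ℤ => ((j.natAbs, decide (0 ≤ j)) : ℕ × Bool)) := by
    intro a b h
    simp only [Prod.mk.injEq, decide_eq_decide] at h
    omega
  calc ∑' j : ℤ, q ^ j.natAbs
      = ∑' j : ℤ, (fun p : ℕ × Bool => q ^ p.1) ((fun j : ℤ => ((j.natAbs, decide (0 ≤ j)) : ℕ × Bool)) j) := rfl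
    _ ≤ ∑' p : ℕ × Bool, q ^ p.1 := tsum_comp_le_tsum_of_injective hinj _
    _ = ∑' (n : ℕ) (_ : Bool), q ^ n := ENNReal.tsum_prod'
    _ = ∑' n : ℕ, 2 * q ^ n := by
        congr 1; funext n; rw [tsum_bool]; ring
    _ = 2 * (1 - q)⁻¹ := by rw [ENNReal.tsum_mul_left, ENNReal.tsum_geometric]

-- product sum over pi type
lemma aux_tsum_pi (q : ℝ≥0∞) : ∀ n : ℕ,
    ∑' z : Fin n → ℤ, ∏ i, q ^ (z i).natAbs = (∑' j : ℤ, q ^ j.natAbs) ^ n := by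
  intro n
  induction n with
  | zero =>
      rw [pow_zero]
      rw [tsum_eq_single (fun _ => 0) (fun b' hb' => absurd (Subsingleton.elim b' _) hb')]
      simp
  | succ n ih =>
      rw [← Equiv.tsum_eq (Fin.consEquiv (fun _ : Fin (n+1) => ℤ))]
      have : ∀ p : ℤ × (Fin n → ℤ),
          (∏ i, q ^ (((Fin.consEquiv (fun _ : Fin (n+1) => ℤ)) p) i).natAbs)
            = q ^ (p.1).natAbs * ∏ i : Fin n, q ^ (p.2 i).natAbs := by
        intro p
        rw [Fin.prod_univ_succ]
        simp [Fin.consEquiv]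
      rw [tsum_congr this, ENNReal.tsum_prod']
      simp_rw [ENNReal.tsum_mul_left, ENNReal.tsum_mul_right, ih]
      ring

set_option maxHeartbeats 1000000 in
/-- Key quantitative estimate in the Combes-Thomas proof: the exponentially tilted
kernel differs from the original by a term linear in the tilt parameter `η`. -/
theorem combes_thomas_tilt_estimate (d : ℕ) (m : ℝ) (hm : 0 < m) :
    ∃ C : ℝ, 0 < C ∧
      ∀ (γ η : ℝ), 0 < γ → 0 < η → η ≤ γ / 2 →
        ∀ (Λ : Set (EuclideanSpace ℝ (Fin d))),
          (∀ x ∈ Λ, ∀ y ∈ Λ, x ≠ y → m ≤ dist x y) →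
          ∀ ℓ ∈ Λ,
            ∑' k : Λ,
                Real.exp (-γ * dist ℓ (k : EuclideanSpace ℝ (Fin d))) *
                  (Real.exp (η * dist ℓ (k : EuclideanSpace ℝ (Fin d))) - 1)
              ≤ C * γ ^ (-((d : ℝ) + 1)) * η := by
  rcases Nat.eq_zero_or_pos d with hd | hd
  · -- degenerate dimension 0
    refine ⟨1, one_pos, ?_⟩
    intro γ η hγ hη hηγ Λ hsep ℓ hℓ
    have hzero : ∀ k : Λ, Real.exp (-γ * dist ℓ (k : EuclideanSpace ℝ (Fin d))) *
        (Real.exp (η * dist ℓ (k : EuclideanSpace ℝ (Fin d))) - 1) = 0 := by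
      intro k
      have hdist : dist ℓ (k : EuclideanSpace ℝ (Fin d)) = 0 := by
        subst hd
        rw [EuclideanSpace.dist_eq]
        simp
      rw [hdist]
      simp
    rw [tsum_congr hzero, tsum_zero]
    have : (0:ℝ) < γ ^ (-((d : ℝ) + 1)) := Real.rpow_pos_of_pos hγ _
    nlinarith
  -- main case d ≥ 1
  have hd0 : (0:ℝ) < d := by exact_mod_cast hd
  set s : ℝ := m / (2 * ((d:ℝ) + 1)) with hs_def
  have hs : 0 < s := by positivity
  have hsm : s ≤ m / 2 := by
    rw [hs_def, div_le_div_iff₀ (by positivity) (by norm_num)]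
    nlinarith
  set K : ℝ := 16 * (d:ℝ) / s with hK_def
  have hK0 : 0 < K := by positivity
  set C0 : ℝ := 2 ^ d * ((32 * (d:ℝ) / m) ^ d + K ^ d) with hC0_def
  have hC0 : 0 ≤ C0 := by positivity
  refine ⟨4 * C0 + 1, by positivity, ?_⟩
  intro γ η hγ hη hηγ Λ hsep ℓ hℓ
  set T : Λ → ℝ := fun k => Real.exp (-γ * dist ℓ (k : EuclideanSpace ℝ (Fin d))) *
      (Real.exp (η * dist ℓ (k : EuclideanSpace ℝ (Fin d))) - 1) with hT
  have hTnon : ∀ k : Λ, 0 ≤ T k := by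
    intro k
    apply mul_nonneg (Real.exp_nonneg _)
    have : (1:ℝ) ≤ Real.exp (η * dist ℓ (k : EuclideanSpace ℝ (Fin d))) :=
      Real.one_le_exp (by positivity)
    linarith
  have hrpow : γ ^ (-((d:ℝ) + 1)) = (γ ^ (d+1))⁻¹ := by
    rw [show -((d:ℝ)+1) = -((d+1 : ℕ) : ℝ) by push_cast; ring,
      Real.rpow_neg hγ.le, Real.rpow_natCast]
  have hRHSpos : 0 < (4 * C0 + 1) * γ ^ (-((d : ℝ) + 1)) * η := by
    have : (0:ℝ) < γ ^ (-((d : ℝ) + 1)) := Real.rpow_pos_of_pos hγ _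
    positivity
  -- coordinate bound
  have hcoord : ∀ (x y : EuclideanSpace ℝ (Fin d)) (i : Fin d), |x i - y i| ≤ dist x y := by
    intro x y i
    rw [EuclideanSpace.dist_eq, show |x i - y i| = Real.sqrt ((x i - y i)^2) from (Real.sqrt_sq_eq_abs _).symm]
    apply Real.sqrt_le_sqrt
    have h : dist (x i) (y i) ^ 2 = (x i - y i)^2 := by rw [Real.dist_eq, sq_abs]
    rw [← h]
    exact Finset.single_le_sum (f := fun j => dist (x j) (y j) ^ 2)
      (fun j _ => sq_nonneg _) (Finset.mem_univ i)
  -- floor separation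
  have hfloor : ∀ x y : ℝ, s * (((⌊x / s⌋ - ⌊y / s⌋).natAbs : ℝ) - 1) ≤ |x - y| := by
    intro x y
    have hx1 : (⌊x / s⌋ : ℝ) * s ≤ x := by
      rw [← le_div_iff₀ hs]; exact Int.floor_le _
    have hx2 : x < ((⌊x / s⌋ : ℝ) + 1) * s := by
      rw [← div_lt_iff₀ hs]; exact Int.lt_floor_add_one _
    have hy1 : (⌊y / s⌋ : ℝ) * s ≤ y := by
      rw [← le_div_iff₀ hs]; exact Int.floor_le _
    have hy2 : y < ((⌊y / s⌋ : ℝ) + 1) * s := by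
      rw [← div_lt_iff₀ hs]; exact Int.lt_floor_add_one _
    have habs : ((⌊x / s⌋ - ⌊y / s⌋).natAbs : ℝ) = |(⌊x / s⌋ : ℝ) - (⌊y / s⌋ : ℝ)| := by
      rw [Nat.cast_natAbs]; push_cast; ring_nf
    rw [habs]
    rcases abs_cases ((⌊x / s⌋ : ℝ) - (⌊y / s⌋ : ℝ)) with ⟨he, _⟩ | ⟨he, _⟩ <;> rw [he]
    · have h := le_abs_self (x - y); nlinarith
    · have h := neg_abs_le (x - y); nlinarith
  set w : Fin d → ℤ := fun i => ⌊ℓ i / s⌋ with hw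
  set φ : Λ → (Fin d → ℤ) := fun k i => ⌊(k : EuclideanSpace ℝ (Fin d)) i / s⌋ with hφ
  -- injectivity
  have hφinj : Function.Injective φ := by
    intro k k' hkk
    by_contra hne
    have hnee : (k : EuclideanSpace ℝ (Fin d)) ≠ (k' : EuclideanSpace ℝ (Fin d)) :=
      fun h => hne (Subtype.ext h)
    have hsep' : m ≤ dist (k : EuclideanSpace ℝ (Fin d)) (k' : EuclideanSpace ℝ (Fin d)) :=
      hsep _ k.2 _ k'.2 hnee
    have hc : ∀ i, dist ((k : EuclideanSpace ℝ (Fin d)) i) ((k' : EuclideanSpace ℝ (Fin d)) i) ^ 2 ≤ s^2 := by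
      intro i
      set x := (k : EuclideanSpace ℝ (Fin d)) i
      set y := (k' : EuclideanSpace ℝ (Fin d)) i
      have hz : ⌊x / s⌋ = ⌊y / s⌋ := congrFun hkk i
      have hx1 : (⌊x / s⌋ : ℝ) * s ≤ x := by
        rw [← le_div_iff₀ hs]; exact Int.floor_le _
      have hx2 : x < ((⌊x / s⌋ : ℝ) + 1) * s := by
        rw [← div_lt_iff₀ hs]; exact Int.lt_floor_add_one _
      have hy1 : (⌊y / s⌋ : ℝ) * s ≤ y := by
        rw [← le_div_iff₀ hs]; exact Int.floor_le _
      have hy2 : y < ((⌊y / s⌋ : ℝ) + 1) * s := by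
        rw [← div_lt_iff₀ hs]; exact Int.lt_floor_add_one _
      rw [Real.dist_eq, sq_abs]
      rw [hz] at hx1 hx2
      nlinarith
    have hdle : dist (k : EuclideanSpace ℝ (Fin d)) (k' : EuclideanSpace ℝ (Fin d))
        ≤ Real.sqrt ((d:ℝ) * s^2) := by
      rw [EuclideanSpace.dist_eq]
      apply Real.sqrt_le_sqrt
      calc ∑ i, dist ((k : EuclideanSpace ℝ (Fin d)) i) ((k' : EuclideanSpace ℝ (Fin d)) i) ^ 2
          ≤ ∑ _i : Fin d, s^2 := Finset.sum_le_sum (fun i _ => hc i)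
        _ = (d:ℝ) * s^2 := by
            rw [Finset.sum_const, Finset.card_univ, Fintype.card_fin, nsmul_eq_mul]
    have hsq : Real.sqrt ((d:ℝ) * s^2) ≤ m / 2 := by
      rw [show (m/2 : ℝ) = Real.sqrt ((m/2)^2) from (Real.sqrt_sq (by positivity)).symm]
      apply Real.sqrt_le_sqrt
      have hs_eq : s * (2 * ((d:ℝ) + 1)) = m := by
        rw [hs_def]; field_simp
      nlinarith [hs_eq, sq_nonneg s, mul_nonneg (sq_nonneg s) hd0.le,
        mul_nonneg (mul_nonneg (sq_nonneg s) hd0.le) hd0.le]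
    linarith
  -- distance lower bound via coordinate counts
  set N : Λ → ℕ := fun k => ∑ i, (φ k i - w i).natAbs with hN
  have hrN : ∀ k : Λ, s * (N k : ℝ) ≤ (d:ℝ) * dist ℓ (k : EuclideanSpace ℝ (Fin d)) + s * d := by
    intro k
    have h1 : ∀ i : Fin d, s * (((φ k i - w i).natAbs : ℝ) - 1)
        ≤ dist ℓ (k : EuclideanSpace ℝ (Fin d)) := by
      intro i
      calc s * (((φ k i - w i).natAbs : ℝ) - 1)
          ≤ |(k : EuclideanSpace ℝ (Fin d)) i - ℓ i| := hfloor _ _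
        _ = |ℓ i - (k : EuclideanSpace ℝ (Fin d)) i| := abs_sub_comm _ _
        _ ≤ dist ℓ (k : EuclideanSpace ℝ (Fin d)) := hcoord ℓ _ i
    have h2 := Finset.sum_le_sum (fun i (_ : i ∈ Finset.univ) => h1 i)
    have h3 : ∑ i : Fin d, s * (((φ k i - w i).natAbs : ℝ) - 1)
        = s * (N k : ℝ) - s * d := by
      rw [hN]
      push_cast
      simp only [mul_sub, mul_one]
      rw [Finset.sum_sub_distrib, ← Finset.mul_sum]
      simp only [Finset.sum_const, Finset.card_univ, Fintype.card_fin, nsmul_eq_mul]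
      ring
    rw [h3] at h2
    have h4 : ∑ _i : Fin d, dist ℓ (k : EuclideanSpace ℝ (Fin d))
        = (d:ℝ) * dist ℓ (k : EuclideanSpace ℝ (Fin d)) := by
      rw [Finset.sum_const, Finset.card_univ, Fintype.card_fin, nsmul_eq_mul]
    rw [h4] at h2
    linarith
  -- the pointwise bound
  set b : ℝ := γ * s / (8 * d) with hb_def
  have hb : 0 < b := by positivity
  set ρ : ℝ := Real.exp (-b) with hρ_def
  have hρ0 : 0 ≤ ρ := Real.exp_nonneg _
  have hρ1 : ρ < 1 := Real.exp_lt_one_iff.mpr (by linarith)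
  set c₁ : ℝ := (4 * η / γ) * Real.exp (-(γ * m) / 16) with hc₁_def
  have hc₁ : 0 ≤ c₁ := by positivity
  have hclaim : ∀ k : Λ, T k ≤ c₁ * ∏ i, ρ ^ (φ k i - w i).natAbs := by
    intro k
    have hprod : (∏ i, ρ ^ (φ k i - w i).natAbs) = ρ ^ (N k) := by
      rw [hN, Finset.prod_pow_eq_pow_sum]
    rw [hprod]
    simp only [hT]
    by_cases hk : (k : EuclideanSpace ℝ (Fin d)) = ℓ
    · have hdist : dist ℓ (k : EuclideanSpace ℝ (Fin d)) = 0 := by rw [hk, dist_self]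
      rw [hdist]
      norm_num
      positivity
    · set r := dist ℓ (k : EuclideanSpace ℝ (Fin d)) with hr
      have hrm : m ≤ r := hsep ℓ hℓ _ k.2 (fun h => hk h.symm)
      have hr0 : (0:ℝ) ≤ r := dist_nonneg
      have s1 : Real.exp (-γ * r) * (Real.exp (η * r) - 1) ≤ η * r * Real.exp (-(γ/2) * r) := by
        have e1 : Real.exp (η * r) - 1 ≤ (η*r) * Real.exp (η*r) := aux_exp_sub_one_le _
        calc Real.exp (-γ * r) * (Real.exp (η * r) - 1)
            ≤ Real.exp (-γ*r) * ((η*r) * Real.exp (η*r)) :=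
              mul_le_mul_of_nonneg_left e1 (Real.exp_nonneg _)
          _ = η * r * Real.exp (-γ*r + η*r) := by rw [Real.exp_add]; ring
          _ ≤ η * r * Real.exp (-(γ/2) * r) := by
              apply mul_le_mul_of_nonneg_left (Real.exp_le_exp.mpr (by nlinarith)) (by positivity)
      have s2 : r * Real.exp (-(γ/4) * r) ≤ 4 / γ := by
        have hu : (γ/4) * r ≤ Real.exp ((γ/4)*r) := by
          have := Real.add_one_le_exp ((γ/4)*r); linarith
        have h5 : r ≤ (4/γ) * Real.exp ((γ/4)*r) := by
          have h6 := mul_le_mul_of_nonneg_left hu (le_of_lt (by positivity : (0:ℝ) < 4/γ))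
          have h7 : (4/γ) * ((γ/4)*r) = r := by
            field_simp
          linarith [h6, h7]
        calc r * Real.exp (-(γ/4) * r)
            ≤ ((4/γ) * Real.exp ((γ/4)*r)) * Real.exp (-(γ/4)*r) :=
              mul_le_mul_of_nonneg_right h5 (Real.exp_nonneg _)
          _ = 4/γ := by
              rw [mul_assoc, ← Real.exp_add, show (γ/4)*r + -(γ/4)*r = 0 by ring,
                Real.exp_zero, mul_one]
      have hrN' : s * (N k : ℝ) / d - s ≤ r := by
        have h7 : s * (N k : ℝ) / d ≤ r + s := by
          rw [div_le_iff₀ hd0]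
          have := hrN k
          rw [← hr] at this
          nlinarith
        linarith
      have s4 : Real.exp (-(γ/4) * r) ≤ Real.exp (-(γ*m)/16) * ρ ^ (N k) := by
        have hexp : Real.exp (-(γ*m)/16) * ρ ^ (N k)
            = Real.exp (-(γ*m)/16 + (N k : ℝ) * (-b)) := by
          rw [Real.exp_add, hρ_def, ← Real.exp_nat_mul]
        rw [hexp]
        apply Real.exp_le_exp.mpr
        have P1 : (γ/8) * m ≤ (γ/8) * r := mul_le_mul_of_nonneg_left hrm (by positivity)
        have P2 : (γ/8) * (s * (N k : ℝ) / d - s) ≤ (γ/8) * r :=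
          mul_le_mul_of_nonneg_left hrN' (by positivity)
        have P3 : (γ/8) * s ≤ (γ/8) * (m/2) := mul_le_mul_of_nonneg_left hsm (by positivity)
        have hbexp : (N k : ℝ) * (-b) = -((γ/8) * (s * (N k : ℝ) / d)) := by
          rw [hb_def]; field_simp
        rw [hbexp]
        nlinarith [P1, P2, P3]
      calc Real.exp (-γ * r) * (Real.exp (η * r) - 1)
          ≤ η * r * Real.exp (-(γ/2) * r) := s1
        _ = η * (r * Real.exp (-(γ/4)*r)) * Real.exp (-(γ/4)*r) := by
            rw [show Real.exp (-(γ/2) * r) = Real.exp (-(γ/4)*r) * Real.exp (-(γ/4)*r) by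
              rw [← Real.exp_add]; ring_nf]
            ring
        _ ≤ η * (4/γ) * Real.exp (-(γ/4)*r) := by
            apply mul_le_mul_of_nonneg_right _ (Real.exp_nonneg _)
            exact mul_le_mul_of_nonneg_left s2 hη.le
        _ ≤ η * (4/γ) * (Real.exp (-(γ*m)/16) * ρ ^ (N k)) :=
            mul_le_mul_of_nonneg_left s4 (by positivity)
        _ = c₁ * ρ ^ (N k) := by rw [hc₁_def]; ring
  -- the real final inequality
  have h1ρ : 0 < 1 - ρ := by linarith
  have hA : (1 - ρ)⁻¹ ≤ (1 + b) / b := by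
    have hbb : (0:ℝ) < 1 + b := by linarith
    have hρle : ρ ≤ (1 + b)⁻¹ := by
      rw [hρ_def, Real.exp_neg]
      exact inv_anti₀ hbb (by linarith [Real.add_one_le_exp b])
    have hlow : b / (1 + b) ≤ 1 - ρ := by
      have hid : b / (1 + b) = 1 - (1 + b)⁻¹ := by field_simp; ring
      linarith [hid, hρle]
    calc (1 - ρ)⁻¹ ≤ (b / (1 + b))⁻¹ := inv_anti₀ (by positivity) hlow
      _ = (1 + b) / b := by rw [inv_div]
  have hB : 2 * (1 - ρ)⁻¹ ≤ (2*γ + K) / γ := by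
    have h8 : 2 * ((1 + b) / b) = (2*γ + K) / γ := by
      rw [hb_def, hK_def]
      field_simp
      ring
    nlinarith [hA]
  have hC : (2 * (1 - ρ)⁻¹) ^ d ≤ ((2*γ + K) / γ) ^ d :=
    pow_le_pow_left₀ (by positivity) hB d
  have hD : Real.exp (-(γ*m)/16) * (2*γ + K) ^ d ≤ C0 := by
    have hmax : 2*γ + K ≤ 2 * max (2*γ) K := by
      have h9 := le_max_left (2*γ) K
      have h10 := le_max_right (2*γ) K
      linarith
    have hstep : (2*γ + K) ^ d ≤ 2^d * ((2*γ)^d + K^d) := by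
      calc (2*γ + K) ^ d ≤ (2 * max (2*γ) K) ^ d :=
            pow_le_pow_left₀ (by positivity) hmax d
        _ = 2^d * (max (2*γ) K)^d := mul_pow 2 _ d
        _ ≤ 2^d * ((2*γ)^d + K^d) := by
            apply mul_le_mul_of_nonneg_left _ (by positivity)
            rcases max_cases (2*γ) K with ⟨h11, _⟩ | ⟨h11, _⟩ <;> rw [h11] <;>
              nlinarith [pow_nonneg (by positivity : (0:ℝ) ≤ 2*γ) d, pow_nonneg hK0.le d]
    have hone : Real.exp (-(γ*m)/16) ≤ 1 := Real.exp_le_one_iff.mpr (by nlinarith)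
    have hgpow : (2*γ)^d * Real.exp (-(γ*m)/16) ≤ (32*(d:ℝ)/m)^d := by
      have hid2 : (2*γ)^d = (32/m)^d * (γ*m/16)^d := by
        rw [← mul_pow]
        congr 1
        field_simp
        ring
      have haux := aux_pow_mul_exp_neg_le d hd (x := γ*m/16) (by positivity)
      have hexpid : Real.exp (-(γ*m)/16) = Real.exp (-(γ*m/16)) := by ring_nf
      calc (2*γ)^d * Real.exp (-(γ*m)/16)
          = (32/m)^d * ((γ*m/16)^d * Real.exp (-(γ*m/16))) := by
            rw [hid2, hexpid]; ring
        _ ≤ (32/m)^d * (d:ℝ)^d := mul_le_mul_of_nonneg_left haux (by positivity)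
        _ = (32*(d:ℝ)/m)^d := by rw [← mul_pow]; congr 1; field_simp
    calc Real.exp (-(γ*m)/16) * (2*γ + K) ^ d
        ≤ Real.exp (-(γ*m)/16) * (2^d * ((2*γ)^d + K^d)) :=
          mul_le_mul_of_nonneg_left hstep (Real.exp_nonneg _)
      _ = 2^d * ((2*γ)^d * Real.exp (-(γ*m)/16) + K^d * Real.exp (-(γ*m)/16)) := by ring
      _ ≤ 2^d * ((32*(d:ℝ)/m)^d + K^d) := by
          apply mul_le_mul_of_nonneg_left _ (by positivity)
          have h12 : K^d * Real.exp (-(γ*m)/16) ≤ K^d := by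
            nlinarith [pow_nonneg hK0.le d, Real.exp_nonneg (-(γ*m)/16)]
          linarith [hgpow, h12]
      _ = C0 := hC0_def.symm
  have hfinal : c₁ * (2 * (1 - ρ)⁻¹) ^ d ≤ (4 * C0 + 1) * γ ^ (-((d : ℝ) + 1)) * η := by
    have hγp : (0:ℝ) < γ ^ (d+1) := by positivity
    calc c₁ * (2 * (1 - ρ)⁻¹) ^ d ≤ c₁ * ((2*γ + K) / γ) ^ d :=
          mul_le_mul_of_nonneg_left hC hc₁
      _ = (4*η) * (Real.exp (-(γ*m)/16) * (2*γ + K)^d) / γ^(d+1) := by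
          rw [hc₁_def, div_pow, pow_succ]
          field_simp
      _ ≤ (4*η) * C0 / γ^(d+1) := by
          gcongr
      _ ≤ (4 * C0 + 1) * γ ^ (-((d : ℝ) + 1)) * η := by
          rw [hrpow]
          rw [div_eq_mul_inv, show (4*η) * C0 * (γ^(d+1))⁻¹ = (4*C0) * (γ^(d+1))⁻¹ * η by ring]
          apply mul_le_mul_of_nonneg_right _ hη.le
          apply mul_le_mul_of_nonneg_right (by linarith) (by positivity)
  -- aggregate via ENNReal
  by_cases hsum : Summable T
  · set q : ℝ≥0∞ := ENNReal.ofReal ρ with hq_def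
    have key : ∑' k : Λ, ENNReal.ofReal (T k)
        ≤ ENNReal.ofReal ((4 * C0 + 1) * γ ^ (-((d : ℝ) + 1)) * η) := by
      calc ∑' k : Λ, ENNReal.ofReal (T k)
          ≤ ∑' k : Λ, ENNReal.ofReal (c₁ * ∏ i, ρ ^ (φ k i - w i).natAbs) :=
            ENNReal.tsum_le_tsum (fun k => ENNReal.ofReal_le_ofReal (hclaim k))
        _ = ∑' k : Λ, (fun z : Fin d → ℤ =>
              ENNReal.ofReal c₁ * ∏ i, q ^ (z i - w i).natAbs) (φ k) := by
            apply tsum_congr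
            intro k
            rw [ENNReal.ofReal_mul hc₁, ENNReal.ofReal_prod_of_nonneg
              (fun i _ => pow_nonneg hρ0 _)]
            simp_rw [ENNReal.ofReal_pow hρ0]
            rfl
        _ ≤ ∑' z : Fin d → ℤ, ENNReal.ofReal c₁ * ∏ i, q ^ (z i - w i).natAbs :=
            tsum_comp_le_tsum_of_injective hφinj _
        _ = ENNReal.ofReal c₁ * ∑' z : Fin d → ℤ, ∏ i, q ^ (z i - w i).natAbs :=
            ENNReal.tsum_mul_left
        _ = ENNReal.ofReal c₁ * ∑' z : Fin d → ℤ, ∏ i, q ^ (z i).natAbs := by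
            congr 1
            rw [← Equiv.tsum_eq (Equiv.addRight w)
              (fun z => ∏ i, q ^ (z i - w i).natAbs)]
            apply tsum_congr
            intro z
            apply Finset.prod_congr rfl
            intro i _
            simp [Equiv.addRight]
        _ = ENNReal.ofReal c₁ * (∑' j : ℤ, q ^ j.natAbs) ^ d := by rw [aux_tsum_pi]
        _ ≤ ENNReal.ofReal c₁ * (2 * (1 - q)⁻¹) ^ d :=
            mul_le_mul_right (pow_le_pow_left' (aux_tsum_int_le q) d) _
        _ = ENNReal.ofReal (c₁ * (2 * (1 - ρ)⁻¹) ^ d) := by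
            rw [ENNReal.ofReal_mul hc₁]
            congr 1
            rw [ENNReal.ofReal_pow (by positivity)]
            congr 1
            rw [ENNReal.ofReal_mul (by norm_num : (0:ℝ) ≤ 2),
              ENNReal.ofReal_inv_of_pos h1ρ, ENNReal.ofReal_sub 1 hρ0, ENNReal.ofReal_one]
            norm_num
            rfl
        _ ≤ ENNReal.ofReal ((4 * C0 + 1) * γ ^ (-((d : ℝ) + 1)) * η) :=
            ENNReal.ofReal_le_ofReal hfinal
    rw [← ENNReal.ofReal_tsum_of_nonneg hTnon hsum] at key
    exact (ENNReal.ofReal_le_ofReal_iff hRHSpos.le).mp key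
  · rw [tsum_eq_zero_of_not_summable hsum]
    exact hRHSpos.le
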